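/- Under the Bernoulli product model with $\sum_j p_j \leq W$, the mean squared error of the Good-Turing estimator satisfies $\mathbb{E}[(\hat{M}_n - M_n)^2] \leq \frac{W^2}{n^2} + \frac{2n+1}{n(n+1)} W$ for every $n\geq 1$. -/

import Mathlib

open MeasureTheory ProbabilityTheory Real Filter

/-- Key elementary inequality: `m * p * (1-p)^(m-1) ≤ 1` for `p ∈ [0,1]`. -/
lemma aux_geom {p : ℝ} (hp0 : 0 ≤ p) (hp1 : p ≤ 1) (m : ℕ) :
    (m : ℝ) * (p * (1 - p) ^ (m - 1)) ≤ 1 := by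
  rcases Nat.eq_zero_or_pos m with h | h
  · simp [h]
  have hq0 : (0:ℝ) ≤ 1 - p := by linarith
  have key : (m : ℝ) * (1 - p) ^ (m - 1) ≤ ∑ k ∈ Finset.range m, (1 - p) ^ k := by
    calc (m : ℝ) * (1 - p) ^ (m - 1)
        = ∑ _k ∈ Finset.range m, (1 - p) ^ (m - 1) := by
          rw [Finset.sum_const, Finset.card_range, nsmul_eq_mul]
      _ ≤ ∑ k ∈ Finset.range m, (1 - p) ^ k := by
          refine Finset.sum_le_sum fun k hk => ?_
          refine pow_le_pow_of_le_one hq0 (by linarith) ?_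
          have := Finset.mem_range.mp hk; omega
  have geom : (∑ k ∈ Finset.range m, (1 - p) ^ k) * p = 1 - (1 - p) ^ m := by
    have h2 := geom_sum_mul (1 - p) m
    linear_combination -h2
  have hge : (0:ℝ) ≤ (1 - p) ^ m := pow_nonneg hq0 m
  calc (m : ℝ) * (p * (1 - p) ^ (m - 1))
      = ((m : ℝ) * (1 - p) ^ (m - 1)) * p := by ring
    _ ≤ (∑ k ∈ Finset.range m, (1 - p) ^ k) * p := mul_le_mul_of_nonneg_right key hp0
    _ = 1 - (1 - p) ^ m := geom
    _ ≤ 1 := by linarith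

/-- Fatou-type lemma: a.e. limit of partial objects with uniformly bounded second
moments has second moment bounded by the same constant. -/
lemma aux_fatou_sq {Ω : Type*} [MeasurableSpace Ω] (μ : Measure Ω) [IsProbabilityMeasure μ]
    (S : ℕ → Ω → ℝ) (g : Ω → ℝ) (C : ℝ) (hC : 0 ≤ C)
    (hSm : ∀ N, Measurable (S N))
    (hconv : ∀ᵐ ω ∂μ, Tendsto (fun N => S N ω) atTop (nhds (g ω)))
    (hint : ∀ N, Integrable (fun ω => S N ω ^ 2) μ)
    (hbd : ∀ N, ∫ ω, S N ω ^ 2 ∂μ ≤ C) :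
    ∫ ω, g ω ^ 2 ∂μ ≤ C := by
  have hgm : AEMeasurable g μ :=
    aemeasurable_of_tendsto_metrizable_ae _ (fun N => (hSm N).aemeasurable) hconv
  have hnn : 0 ≤ᵐ[μ] fun ω => g ω ^ 2 := ae_of_all _ fun ω => sq_nonneg _
  rw [integral_eq_lintegral_of_nonneg_ae hnn ((hgm.pow_const 2).aestronglyMeasurable)]
  have key : ∫⁻ ω, ENNReal.ofReal (g ω ^ 2) ∂μ ≤ ENNReal.ofReal C := by
    have hle : ∫⁻ ω, ENNReal.ofReal (g ω ^ 2) ∂μ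
        ≤ liminf (fun N => ∫⁻ ω, ENNReal.ofReal (S N ω ^ 2) ∂μ) atTop := by
      have heq : ∫⁻ ω, ENNReal.ofReal (g ω ^ 2) ∂μ
          = ∫⁻ ω, liminf (fun N => ENNReal.ofReal (S N ω ^ 2)) atTop ∂μ := by
        refine lintegral_congr_ae ?_
        filter_upwards [hconv] with ω hω
        have h2 : Tendsto (fun N => ENNReal.ofReal (S N ω ^ 2)) atTop
            (nhds (ENNReal.ofReal (g ω ^ 2))) :=
          (ENNReal.continuous_ofReal.tendsto _).comp (hω.pow 2)
        exact h2.liminf_eq.symm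
      rw [heq]
      exact lintegral_liminf_le fun N => ((hSm N).pow_const 2).ennreal_ofReal
    refine hle.trans ?_
    have hN : ∀ N, ∫⁻ ω, ENNReal.ofReal (S N ω ^ 2) ∂μ ≤ ENNReal.ofReal C := by
      intro N
      rw [← ofReal_integral_eq_lintegral_ofReal (hint N) (ae_of_all _ fun ω => sq_nonneg _)]
      exact ENNReal.ofReal_le_ofReal (hbd N)
    calc liminf (fun N => ∫⁻ ω, ENNReal.ofReal (S N ω ^ 2) ∂μ) atTop
        ≤ liminf (fun _ => ENNReal.ofReal C) atTop :=
          liminf_le_liminf (Eventually.of_forall hN)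
      _ = ENNReal.ofReal C := liminf_const _
  calc (∫⁻ ω, ENNReal.ofReal (g ω ^ 2) ∂μ).toReal
      ≤ (ENNReal.ofReal C).toReal := ENNReal.toReal_mono ENNReal.ofReal_ne_top key
    _ = C := ENNReal.toReal_ofReal hC

theorem stmt
    {Ω : Type*} [MeasurableSpace Ω] (μ : Measure Ω) [IsProbabilityMeasure μ]
    (p : ℕ → ℝ) (hp : ∀ j, p j ∈ Set.Ioo (0 : ℝ) 1) (hsum : Summable p)
    (n : ℕ) (X : ℕ → Ω → ℕ)
    (hmeas : ∀ j, Measurable (X j))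
    (hindep : iIndepFun X μ)
    (hbin : ∀ j k, μ {ω | X j ω = k} =
      ENNReal.ofReal ((n.choose k : ℝ) * p j ^ k * (1 - p j) ^ (n - k)))
    (W : ℝ) (hW : ∑' j, p j ≤ W) (hn : 1 ≤ n) :
    (∫ ω, ((∑' j, if X j ω = 1 then (1 : ℝ) else 0) / n
        - ∑' j, if X j ω = 0 then p j else 0) ^ 2 ∂μ)
      ≤ W ^ 2 / n ^ 2 + (2 * n + 1) / (n * (n + 1)) * W := by
  have hp0 : ∀ j, 0 < p j := fun j => (hp j).1
  have hp1 : ∀ j, p j < 1 := fun j => (hp j).2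
  have hq0 : ∀ j, (0:ℝ) ≤ 1 - p j := fun j => by linarith [hp1 j]
  have hq1 : ∀ j, (1:ℝ) - p j ≤ 1 := fun j => by linarith [hp0 j]
  have hnR : (1:ℝ) ≤ (n:ℝ) := by exact_mod_cast hn
  have hn' : (0:ℝ) < (n:ℝ) := by linarith
  have hn0 : (n:ℝ) ≠ 0 := ne_of_gt hn'
  have hW0 : 0 ≤ W := le_trans (tsum_nonneg fun j => (hp0 j).le) hW
  -- measurable sets
  have hA : ∀ j, MeasurableSet {ω | X j ω = 1} := fun j => hmeas j (measurableSet_singleton 1)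
  have hB : ∀ j, MeasurableSet {ω | X j ω = 0} := fun j => hmeas j (measurableSet_singleton 0)
  -- measure values
  have hμ1 : ∀ j, μ {ω | X j ω = 1} = ENNReal.ofReal ((n:ℝ) * (p j * (1 - p j) ^ (n-1))) := by
    intro j
    rw [hbin j 1]
    congr 1
    rw [Nat.choose_one_right, pow_one]
    ring
  have hμ0 : ∀ j, μ {ω | X j ω = 0} = ENNReal.ofReal ((1 - p j) ^ n) := by
    intro j
    rw [hbin j 0]
    norm_num
  -- the summands
  set Y : ℕ → Ω → ℝ :=
    fun j ω => (if X j ω = 1 then (1:ℝ)/n else 0) - (if X j ω = 0 then p j else 0) with hYdef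
  have hYmeas : ∀ j, Measurable (Y j) := fun j =>
    (Measurable.ite (hA j) measurable_const measurable_const).sub
      (Measurable.ite (hB j) measurable_const measurable_const)
  have hYbdd : ∀ j ω, |Y j ω| ≤ 1 := by
    intro j ω
    rw [hYdef]
    simp only
    have ha0 : (0:ℝ) ≤ (if X j ω = 1 then (1:ℝ)/n else 0) := by split_ifs <;> positivity
    have ha1 : (if X j ω = 1 then (1:ℝ)/n else 0) ≤ 1 := by
      split_ifs
      · rw [div_le_one hn']; linarith
      · linarith
    have hb0 : (0:ℝ) ≤ (if X j ω = 0 then p j else 0) := by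
      split_ifs
      · exact (hp0 j).le
      · exact le_refl _
    have hb1 : (if X j ω = 0 then p j else 0) ≤ 1 := by split_ifs <;> linarith [hp1 j]
    rw [abs_sub_le_iff]
    constructor <;> linarith
  have hIntY : ∀ j, Integrable (Y j) μ :=
    fun j => (integrable_const (1:ℝ)).mono' (hYmeas j).aestronglyMeasurable
      (ae_of_all _ fun ω => by simpa using hYbdd j ω)
  have hIntYY : ∀ j k, Integrable (fun ω => Y j ω * Y k ω) μ := by
    intro j k
    refine (integrable_const (1:ℝ)).mono' ((hYmeas j).mul (hYmeas k)).aestronglyMeasurable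
      (ae_of_all _ fun ω => ?_)
    rw [norm_mul]
    calc ‖Y j ω‖ * ‖Y k ω‖ ≤ 1 * 1 :=
        mul_le_mul (hYbdd j ω) (hYbdd k ω) (norm_nonneg _) zero_le_one
      _ = 1 := one_mul 1
  -- moments
  have hpow : ∀ x : ℝ, x ^ n = x ^ (n-1) * x := by
    intro x
    rw [← pow_succ]
    congr 1
    omega
  set e : ℕ → ℝ := fun j => p j ^ 2 * (1 - p j) ^ (n-1) with hedef
  set v : ℕ → ℝ := fun j => p j * (1 - p j) ^ (n-1) / n + p j ^ 2 * (1 - p j) ^ n with hvdef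
  have hEY : ∀ j, ∫ ω, Y j ω ∂μ = e j := by
    intro j
    have hfun : Y j = fun ω =>
        Set.indicator {ω | X j ω = 1} (fun _ => (1:ℝ)/n) ω
        + Set.indicator {ω | X j ω = 0} (fun _ => -p j) ω := by
      funext ω
      by_cases h1 : X j ω = 1
      · have h0 : ¬ X j ω = 0 := by rw [h1]; simp
        simp [hYdef, Set.indicator, h1, h0]
      · by_cases h0 : X j ω = 0 <;> simp [hYdef, Set.indicator, h1, h0]
    rw [hfun, integral_add ((integrable_const _).indicator (hA j))
        ((integrable_const _).indicator (hB j)),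
      integral_indicator_const _ (hA j), integral_indicator_const _ (hB j),
      measureReal_def, measureReal_def, hμ1 j, hμ0 j,
      ENNReal.toReal_ofReal (mul_nonneg hn'.le (mul_nonneg (hp0 j).le (pow_nonneg (hq0 j) _))),
      ENNReal.toReal_ofReal (pow_nonneg (hq0 j) n)]
    simp only [smul_eq_mul, hedef]
    rw [hpow (1 - p j)]
    field_simp
    ring
  have hEY2 : ∀ j, ∫ ω, Y j ω ^ 2 ∂μ = v j := by
    intro j
    have hfun : (fun ω => Y j ω ^ 2) = fun ω =>
        Set.indicator {ω | X j ω = 1} (fun _ => (1:ℝ)/n^2) ω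
        + Set.indicator {ω | X j ω = 0} (fun _ => p j ^ 2) ω := by
      funext ω
      by_cases h1 : X j ω = 1
      · have h0 : ¬ X j ω = 0 := by rw [h1]; simp
        simp [hYdef, Set.indicator, h1, h0]
        try ring
      · by_cases h0 : X j ω = 0 <;> simp [hYdef, Set.indicator, h1, h0]
    rw [hfun, integral_add ((integrable_const _).indicator (hA j))
        ((integrable_const _).indicator (hB j)),
      integral_indicator_const _ (hA j), integral_indicator_const _ (hB j),
      measureReal_def, measureReal_def, hμ1 j, hμ0 j,
      ENNReal.toReal_ofReal (mul_nonneg hn'.le (mul_nonneg (hp0 j).le (pow_nonneg (hq0 j) _))),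
      ENNReal.toReal_ofReal (pow_nonneg (hq0 j) n)]
    simp only [smul_eq_mul, hvdef]
    field_simp
  have he0 : ∀ j, 0 ≤ e j := fun j => mul_nonneg (sq_nonneg _) (pow_nonneg (hq0 j) _)
  have heub : ∀ j, e j ≤ p j / n := by
    intro j
    have hx : p j * (1 - p j) ^ (n-1) ≤ 1 / n := by
      rw [le_div_iff₀ hn']
      have := aux_geom (hp0 j).le (hp1 j).le n
      nlinarith [this]
    calc e j = p j * (p j * (1 - p j) ^ (n-1)) := by rw [hedef]; ring
      _ ≤ p j * (1/n) := mul_le_mul_of_nonneg_left hx (hp0 j).le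
      _ = p j / n := by ring
  have hvub : ∀ j, v j ≤ (2*(n:ℝ)+1) / (n*(n+1)) * p j := by
    intro j
    have h1 : (1 - p j) ^ (n-1) ≤ 1 := pow_le_one₀ (hq0 j) (hq1 j)
    have h2 : p j * (1 - p j) ^ n ≤ 1 / ((n:ℝ)+1) := by
      have := aux_geom (hp0 j).le (hp1 j).le (n+1)
      rw [le_div_iff₀ (by positivity : (0:ℝ) < (n:ℝ)+1)]
      push_cast at this
      nlinarith [this]
    have hfirst : p j * (1 - p j) ^ (n-1) / n ≤ p j / n := by
      gcongr
      nlinarith [hp0 j, h1]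
    have hsecond : p j ^ 2 * (1 - p j) ^ n ≤ p j / ((n:ℝ)+1) := by
      calc p j ^ 2 * (1 - p j) ^ n = p j * (p j * (1 - p j) ^ n) := by ring
        _ ≤ p j * (1 / ((n:ℝ)+1)) := mul_le_mul_of_nonneg_left h2 (hp0 j).le
        _ = p j / ((n:ℝ)+1) := by ring
    have heq : p j / n + p j / ((n:ℝ)+1) = (2*(n:ℝ)+1) / (n*(n+1)) * p j := by
      field_simp
      ring
    calc v j ≤ p j / n + p j / ((n:ℝ)+1) := by rw [hvdef]; exact add_le_add hfirst hsecond
      _ = (2*(n:ℝ)+1) / (n*(n+1)) * p j := heq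
  -- cross terms via independence
  have hcross : ∀ j k, j ≠ k → ∫ ω, Y j ω * Y k ω ∂μ = e j * e k := by
    intro j k hjk
    have hφm : ∀ c : ℝ, Measurable fun i : ℕ =>
        (if i = 1 then (1:ℝ)/n else 0) - (if i = 0 then c else 0) :=
      fun c => measurable_from_top
    have hind : IndepFun (Y j) (Y k) μ :=
      (hindep.indepFun hjk).comp (hφm (p j)) (hφm (p k))
    have := hind.integral_mul_eq_mul_integral (hIntY j).aestronglyMeasurable (hIntY k).aestronglyMeasurable
    rw [← hEY j, ← hEY k, ← this]
    rfl
  -- partial sums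
  set S : ℕ → Ω → ℝ := fun N ω => ∑ j ∈ Finset.range N, Y j ω with hSdef
  have hSmeas : ∀ N, Measurable (S N) := fun N => Finset.measurable_sum _ fun j _ => hYmeas j
  have hSbd : ∀ N ω, |S N ω| ≤ N := by
    intro N ω
    calc |S N ω| ≤ ∑ j ∈ Finset.range N, |Y j ω| := Finset.abs_sum_le_sum_abs _ _
      _ ≤ ∑ _j ∈ Finset.range N, (1:ℝ) := Finset.sum_le_sum fun j _ => hYbdd j ω
      _ = N := by simp
  have hIntS2 : ∀ N, Integrable (fun ω => S N ω ^ 2) μ := by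
    intro N
    refine (integrable_const ((N:ℝ)^2)).mono' ((hSmeas N).pow_const 2).aestronglyMeasurable
      (ae_of_all _ fun ω => ?_)
    rw [Real.norm_eq_abs, abs_pow]
    exact pow_le_pow_left₀ (abs_nonneg _) (hSbd N ω) 2
  -- second moment bound for partial sums
  have hIS2 : ∀ N, ∫ ω, S N ω ^ 2 ∂μ ≤ W^2/(n:ℝ)^2 + (2*(n:ℝ)+1)/((n:ℝ)*((n:ℝ)+1)) * W := by
    intro N
    have hexp : ∀ ω, S N ω ^ 2 = ∑ j ∈ Finset.range N, ∑ k ∈ Finset.range N, Y j ω * Y k ω := by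
      intro ω
      rw [hSdef]
      simp only
      rw [sq, Finset.sum_mul_sum]
    have hIval : ∀ j ∈ Finset.range N, ∀ k ∈ Finset.range N,
        ∫ ω, Y j ω * Y k ω ∂μ = e j * e k + (if j = k then v j - e j * e j else 0) := by
      intro j _ k _
      by_cases h : j = k
      · subst h
        have : ∀ ω, Y j ω * Y j ω = Y j ω ^ 2 := fun ω => (sq (Y j ω)).symm
        rw [show (fun ω => Y j ω * Y j ω) = fun ω => Y j ω ^ 2 from funext this, hEY2 j,
          if_pos rfl]
        ring
      · rw [hcross j k h, if_neg h]
        ring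
    have hsplit : ∫ ω, S N ω ^ 2 ∂μ
        = ∑ j ∈ Finset.range N, ∑ k ∈ Finset.range N, ∫ ω, Y j ω * Y k ω ∂μ := by
      rw [integral_congr_ae (ae_of_all _ hexp)]
      rw [integral_finset_sum _ fun j _ => integrable_finset_sum _ fun k _ => hIntYY j k]
      exact Finset.sum_congr rfl fun j hj =>
        integral_finset_sum _ fun k _ => hIntYY j k
    rw [hsplit]
    rw [Finset.sum_congr rfl fun j hj => Finset.sum_congr rfl fun k hk => hIval j hj k hk]
    have hsum_split : ∑ j ∈ Finset.range N, ∑ k ∈ Finset.range N,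
        (e j * e k + (if j = k then v j - e j * e j else 0))
        = (∑ j ∈ Finset.range N, e j) * (∑ j ∈ Finset.range N, e j)
          + ∑ j ∈ Finset.range N, (v j - e j * e j) := by
      have hinner : ∀ j ∈ Finset.range N,
          ∑ k ∈ Finset.range N, (e j * e k + (if j = k then v j - e j * e j else 0))
          = (∑ k ∈ Finset.range N, e j * e k) + (v j - e j * e j) := by
        intro j hj
        rw [Finset.sum_add_distrib,
          Finset.sum_ite_eq (Finset.range N) j (fun _ => v j - e j * e j), if_pos hj]
      rw [Finset.sum_congr rfl hinner, Finset.sum_add_distrib, ← Finset.sum_mul_sum]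
    rw [hsum_split]
    -- bound the two pieces
    have hT0 : 0 ≤ ∑ j ∈ Finset.range N, e j := Finset.sum_nonneg fun j _ => he0 j
    have hPsum : ∑ j ∈ Finset.range N, p j ≤ W :=
      le_trans (Summable.sum_le_tsum _ (fun j _ => (hp0 j).le) hsum) hW
    have hT : ∑ j ∈ Finset.range N, e j ≤ W / n := by
      calc ∑ j ∈ Finset.range N, e j ≤ ∑ j ∈ Finset.range N, p j / n :=
          Finset.sum_le_sum fun j _ => heub j
        _ = (∑ j ∈ Finset.range N, p j) / n := by rw [Finset.sum_div]
        _ ≤ W / n := by gcongr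
    have hsq : (∑ j ∈ Finset.range N, e j) * (∑ j ∈ Finset.range N, e j) ≤ W^2/(n:ℝ)^2 := by
      calc (∑ j ∈ Finset.range N, e j) * (∑ j ∈ Finset.range N, e j)
          ≤ (W/n) * (W/n) := mul_le_mul hT hT hT0 (le_trans hT0 hT)
        _ = W^2/(n:ℝ)^2 := by ring
    have hV : ∑ j ∈ Finset.range N, (v j - e j * e j)
        ≤ (2*(n:ℝ)+1)/((n:ℝ)*((n:ℝ)+1)) * W := by
      have hc0 : (0:ℝ) ≤ (2*(n:ℝ)+1)/((n:ℝ)*((n:ℝ)+1)) := by positivity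
      calc ∑ j ∈ Finset.range N, (v j - e j * e j)
          ≤ ∑ j ∈ Finset.range N, v j :=
            Finset.sum_le_sum fun j _ => by nlinarith [mul_self_nonneg (e j)]
        _ ≤ ∑ j ∈ Finset.range N, (2*(n:ℝ)+1)/((n:ℝ)*((n:ℝ)+1)) * p j :=
            Finset.sum_le_sum fun j _ => hvub j
        _ = (2*(n:ℝ)+1)/((n:ℝ)*((n:ℝ)+1)) * ∑ j ∈ Finset.range N, p j := by
            rw [Finset.mul_sum]
        _ ≤ (2*(n:ℝ)+1)/((n:ℝ)*((n:ℝ)+1)) * W := by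
            exact mul_le_mul_of_nonneg_left hPsum hc0
    linarith
  -- Borel-Cantelli
  have hBC : ∀ᵐ ω ∂μ, {j | X j ω = 1}.Finite := by
    refine MeasureTheory.ae_finite_setOf_mem ?_
    have hbound : ∑' j, μ {ω | X j ω = 1} ≤ ENNReal.ofReal (∑' j, (n:ℝ) * p j) := by
      rw [ENNReal.ofReal_tsum_of_nonneg (fun j => mul_nonneg hn'.le (hp0 j).le)
        (hsum.mul_left _)]
      refine ENNReal.tsum_le_tsum fun j => ?_
      rw [hμ1 j]
      refine ENNReal.ofReal_le_ofReal ?_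
      have h1 : (1 - p j) ^ (n-1) ≤ 1 := pow_le_one₀ (hq0 j) (hq1 j)
      have h2 : p j * (1 - p j) ^ (n-1) ≤ p j := by nlinarith [hp0 j]
      exact mul_le_mul_of_nonneg_left h2 hn'.le
    exact ne_top_of_le_ne_top ENNReal.ofReal_ne_top hbound
  -- a.e. convergence of partial sums to the target
  have hgood : ∀ᵐ ω ∂μ, Tendsto (fun N => S N ω) atTop
      (nhds ((∑' j, if X j ω = 1 then (1:ℝ) else 0) / n
        - ∑' j, if X j ω = 0 then p j else 0)) := by
    filter_upwards [hBC] with ω hfin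
    have hs1 : Summable (fun j => if X j ω = 1 then (1:ℝ) else 0) := by
      refine summable_of_ne_finset_zero (s := hfin.toFinset) fun j hj => ?_
      rw [Set.Finite.mem_toFinset] at hj
      exact if_neg hj
    have hs1' : Summable (fun j => if X j ω = 1 then (1:ℝ)/n else 0) := by
      have h := hs1.div_const (n:ℝ)
      refine h.congr fun j => ?_
      by_cases hc : X j ω = 1 <;> simp [hc]
    have hs0 : Summable (fun j => if X j ω = 0 then p j else 0) := by
      refine Summable.of_nonneg_of_le (fun j => ?_) (fun j => ?_) hsum
      · split_ifs
        · exact (hp0 j).le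
        · exact le_refl 0
      · split_ifs
        · exact le_refl _
        · exact (hp0 j).le
    have hsY : Summable (fun j => Y j ω) := hs1'.sub hs0
    have heq : (∑' j, if X j ω = 1 then (1:ℝ) else 0) / n
        - (∑' j, if X j ω = 0 then p j else 0) = ∑' j, Y j ω := by
      rw [hYdef]
      simp only
      rw [Summable.tsum_sub hs1' hs0]
      congr 1
      rw [← tsum_div_const]
      refine tsum_congr fun j => ?_
      by_cases hc : X j ω = 1 <;> simp [hc]
    rw [heq]
    exact hsY.hasSum.tendsto_sum_nat
  -- conclude via Fatou
  have hC0 : (0:ℝ) ≤ W^2/(n:ℝ)^2 + (2*(n:ℝ)+1)/((n:ℝ)*((n:ℝ)+1)) * W :=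
    add_nonneg (by positivity) (mul_nonneg (by positivity) hW0)
  have := aux_fatou_sq μ S
    (fun ω => (∑' j, if X j ω = 1 then (1:ℝ) else 0) / n
      - ∑' j, if X j ω = 0 then p j else 0)
    (W^2/(n:ℝ)^2 + (2*(n:ℝ)+1)/((n:ℝ)*((n:ℝ)+1)) * W)
    hC0 hSmeas hgood hIntS2 hIS2
  exact this
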